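/- Let r, t, m be positive natural numbers, let D : Matrix (Fin r × Fin m) (Fin t × Fin m) ℂ have diagonal blocks, and let ρ be a positive real number. Then the matrix Dᴴ * D + ρ • 1 (where 1 is the identity matrix indexed by Fin t × Fin m) is positive definite, hence invertible, and its inverse (Dᴴ * D + ρ • 1)⁻¹ has diagonal blocks. -/

import Mathlib

open Matrix
open scoped ComplexOrder

/-- A block matrix (with `m × m` blocks) has diagonal blocks if every off-diagonal
entry of every block vanishes. -/
def HasDiagonalBlocks {a b m : ℕ} (X : Matrix (Fin a × Fin m) (Fin b × Fin m) ℂ) : Prop :=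
  ∀ (i : Fin a) (p : Fin m) (j : Fin b) (q : Fin m), p ≠ q → X (i, p) (j, q) = 0

lemma hasDiagonalBlocks_iff_eq_blockDiagonal {a b m : ℕ}
    (X : Matrix (Fin a × Fin m) (Fin b × Fin m) ℂ) :
    HasDiagonalBlocks X ↔ X = blockDiagonal (fun p => fun i j => X (i, p) (j, p)) := by
  constructor
  · intro h
    ext ⟨i, p⟩ ⟨j, q⟩
    by_cases hpq : p = q
    · subst hpq; exact (blockDiagonal_apply_eq (fun p => fun i j => X (i, p) (j, p) : Fin m → Matrix (Fin a) (Fin b) ℂ) ..).symm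
    · refine Eq.trans ?_ (blockDiagonal_apply_ne _ _ _ hpq).symm
      exact h i p j q hpq
  · intro h i p j q hpq
    rw [h]
    exact blockDiagonal_apply_ne _ _ _ hpq

/-- If `D` has diagonal blocks and `ρ > 0` then `Dᴴ * D + ρ • 1` is positive
definite, hence invertible, and its inverse has diagonal blocks. -/
theorem regularized_gram_posDef_isUnit_inv_hasDiagonalBlocks
    (r t m : ℕ) (hr : 0 < r) (ht : 0 < t) (hm : 0 < m)
    (D : Matrix (Fin r × Fin m) (Fin t × Fin m) ℂ)
    (hD : HasDiagonalBlocks D) (ρ : ℝ) (hρ : 0 < ρ) :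
    (Dᴴ * D + (ρ : ℂ) • 1).PosDef ∧ IsUnit (Dᴴ * D + (ρ : ℂ) • 1).det ∧
      HasDiagonalBlocks (Dᴴ * D + (ρ : ℂ) • 1)⁻¹ := by
  set M := Dᴴ * D + (ρ : ℂ) • 1 with hM
  have hpos : M.PosDef := by
    apply Matrix.PosDef.posSemidef_add (Matrix.posSemidef_conjTranspose_mul_self D)
    have : ((ρ : ℂ) • (1 : Matrix (Fin t × Fin m) (Fin t × Fin m) ℂ)) =
        Matrix.diagonal (fun _ => (ρ : ℂ)) := by
      rw [Matrix.smul_one_eq_diagonal]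
    rw [this]
    exact Matrix.posDef_diagonal_iff.mpr fun _ => by exact_mod_cast hρ
  have hdet : IsUnit M.det := hpos.det_pos.ne'.isUnit
  -- M has diagonal blocks
  have hMdiag : HasDiagonalBlocks M := by
    intro i p j q hpq
    simp only [hM, Matrix.add_apply, Matrix.mul_apply, Matrix.conjTranspose_apply,
      Matrix.smul_apply, Matrix.one_apply, smul_eq_mul]
    have h1 : ∑ k : Fin r × Fin m, star (D k (i, p)) * D k (j, q) = 0 := by
      apply Finset.sum_eq_zero
      rintro ⟨k, s⟩ _
      by_cases hsp : s = p
      · subst hsp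
        rw [hD k s j q hpq, mul_zero]
      · rw [hD k s i p hsp, star_zero, zero_mul]
    rw [h1]
    simp [Prod.ext_iff, hpq]
  rw [hasDiagonalBlocks_iff_eq_blockDiagonal] at hMdiag
  set f : Fin m → Matrix (Fin t) (Fin t) ℂ := fun p => fun i j => M (i, p) (j, p) with hf
  -- each block is invertible
  have hdetf : ∀ p, IsUnit (f p).det := by
    intro p
    have hMd : M.det = ∏ q, (f q).det := by rw [hMdiag, Matrix.det_blockDiagonal]
    rw [hMd] at hdet
    exact isUnit_of_dvd_unit (Finset.dvd_prod_of_mem (fun q => (f q).det) (Finset.mem_univ p)) hdet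
  -- the inverse is the block diagonal of the inverses
  have hinv : M⁻¹ = blockDiagonal (fun p => (f p)⁻¹) := by
    apply Matrix.inv_eq_right_inv
    rw [hMdiag, ← Matrix.blockDiagonal_mul, ← Matrix.blockDiagonal_one]
    have h2 : (fun p => f p * (f p)⁻¹) = fun _ => (1 : Matrix (Fin t) (Fin t) ℂ) :=
      funext fun p => Matrix.mul_nonsing_inv _ (hdetf p)
    rw [h2]
    rfl
  refine ⟨hpos, hdet, ?_⟩
  intro i p j q hpq
  rw [hinv]
  exact Matrix.blockDiagonal_apply_ne _ _ _ hpq
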